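/- Let 0 < α < β and define C_{α,β} = sup over γ ∈ (−1/β, ∞) of C_{α,β,γ}. Then C_{α,β} = max{2^{1/α − 1/β}, 2^{1/β}}; explicitly, C_{α,β} = 2^{1/α − 1/β} if 0 < α ≤ β/2, and C_{α,β} = 2^{1/β} if β/2 < α < β. -/

import Mathlib

open Set

section AuxLemmas
open Real Filter Topology

lemma lemB {t x : ℝ} (ht0 : 0 < t) (ht1 : t < 1) (hx0 : 0 ≤ x) (hx1 : x ≤ 1) :
    (1 + x) ^ t ≤ 1 + (2 ^ t - 1) * x ^ t := by
  rcases eq_or_lt_of_le hx0 with h0 | h0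
  · rw [← h0]
    simp [Real.zero_rpow (ne_of_gt ht0)]
  set g : ℝ → ℝ := fun y => ((1 + y) ^ t - 1) / y ^ t with hg
  have hN : ∀ y : ℝ, 0 < y → HasDerivAt (fun z : ℝ => (1 + z) ^ t - 1)
      (1 * t * (1 + y) ^ (t - 1)) y := by
    intro y hy
    have h1 : HasDerivAt (fun z : ℝ => 1 + z) 1 y := (hasDerivAt_id y).const_add 1
    have := h1.rpow_const (p := t) (Or.inl (by positivity))
    simpa using this.sub_const 1
  have hD : ∀ y : ℝ, 0 < y → HasDerivAt (fun z : ℝ => z ^ t) (t * y ^ (t - 1)) y :=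
    fun y hy => Real.hasDerivAt_rpow_const (Or.inl (ne_of_gt hy))
  have hGd : ∀ y : ℝ, 0 < y → HasDerivAt g
      ((1 * t * (1 + y) ^ (t - 1) * y ^ t - ((1 + y) ^ t - 1) * (t * y ^ (t - 1))) /
        (y ^ t) ^ 2) y := by
    intro y hy
    exact (hN y hy).div (hD y hy) (ne_of_gt (Real.rpow_pos_of_pos hy t))
  have key : MonotoneOn g (Ioc (0:ℝ) 1) := by
    apply monotoneOn_of_deriv_nonneg (convex_Ioc 0 1)
    · intro y hy
      exact ((hGd y hy.1).continuousAt).continuousWithinAt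
    · rw [interior_Ioc]
      intro y hy
      exact ((hGd y hy.1).differentiableAt).differentiableWithinAt
    · rw [interior_Ioc]
      intro y hy
      rw [(hGd y hy.1).deriv]
      have hy0 := hy.1
      have h1y : (0:ℝ) < 1 + y := by linarith
      apply div_nonneg _ (sq_nonneg _)
      have e1 : y ^ t = y ^ (t - 1) * y := by
        rw [← Real.rpow_add_one (ne_of_gt hy0)]
        ring_nf
      have e2 : (1 + y) ^ t = (1 + y) ^ (t - 1) * (1 + y) := by
        rw [← Real.rpow_add_one (ne_of_gt h1y)]
        ring_nf
      have h3 : (1 + y) ^ (t - 1) ≤ 1 :=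
        Real.rpow_le_one_of_one_le_of_nonpos (by linarith) (by linarith)
      have h4 : (0:ℝ) ≤ y ^ (t - 1) := Real.rpow_nonneg hy0.le _
      have h5 : (0:ℝ) ≤ (1 + y) ^ (t - 1) := Real.rpow_nonneg h1y.le _
      rw [e1, e2]
      nlinarith [mul_nonneg h4 (sub_nonneg.2 h3)]
  have hmem : x ∈ Ioc (0:ℝ) 1 := ⟨h0, hx1⟩
  have h1mem : (1:ℝ) ∈ Ioc (0:ℝ) 1 := right_mem_Ioc.2 one_pos
  have := key hmem h1mem hx1
  have hg1 : g 1 = 2 ^ t - 1 := by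
    simp [hg]
    norm_num
  rw [hg1] at this
  have hxt : (0:ℝ) < x ^ t := Real.rpow_pos_of_pos h0 t
  rw [hg, div_le_iff₀ hxt] at this
  linarith


lemma auxbil {p q u c : ℝ} (hq1 : 1 ≤ q) (hqp : q ≤ p) (hp2 : p ≤ 2) (hpq : p * q = 2)
    (hu0 : 0 ≤ u) (hu1 : u ≤ 1) (hc0 : 0 ≤ c) (hc1 : c ≤ 1) :
    (1 + (p - 1) * u) * (1 + (q - 1) * c) ≤ p * (c * u + 1) := by
  have h1 : 0 ≤ (1 - u) * ((p - 1) - c * (q - 1)) := by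
    apply mul_nonneg (by linarith)
    nlinarith
  have h2 : 0 ≤ u * c * (p - 1) := mul_nonneg (mul_nonneg hu0 hc0) (by linarith)
  have h3 : u * c * (p * q) = u * c * 2 := by rw [hpq]
  nlinarith [h1, h2, h3]

end AuxLemmas

/-- The function `C_{α,β,γ}(ε)` from the paper:
`C_{α,β,γ}(ε) = (ε^{γβ+1}+1)^{1/β} (1+ε)^{1/α} / ((ε^{γα+1}+1)^{1/α} (1+ε)^{1/β})`. -/
noncomputable def Cfun (α β γ ε : ℝ) : ℝ :=
  ((ε ^ (γ * β + 1) + 1) ^ (1 / β) * (1 + ε) ^ (1 / α)) /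
    ((ε ^ (γ * α + 1) + 1) ^ (1 / α) * (1 + ε) ^ (1 / β))

/-- `C_{α,β,γ}`: the maximum of `C_{α,β,γ}(ε)` over `ε ∈ [0,1]`. -/
noncomputable def Cmax (α β γ : ℝ) : ℝ :=
  sSup (Cfun α β γ '' Icc (0 : ℝ) 1)

section AuxLemmas2
open Real Filter Topology

lemma cfun_le {α β : ℝ} (hα : 0 < α) (hαβ : α < β) {γ : ℝ} (hγ : -(1 / β) < γ)
    {ε : ℝ} (hε0 : 0 ≤ ε) (hε1 : ε ≤ 1) :
    Cfun α β γ ε ≤ max ((2 : ℝ) ^ (1 / α - 1 / β)) ((2 : ℝ) ^ (1 / β)) := by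
  have hβ : 0 < β := lt_trans hα hαβ
  have ha : 0 < γ * β + 1 := by
    have h1 : -(1 / β) * β = -1 := by field_simp
    have h2 := mul_lt_mul_of_pos_right hγ hβ
    rw [h1] at h2; linarith
  have hb : 0 < γ * α + 1 := by
    rcases le_or_gt 0 γ with h | h
    · nlinarith
    · nlinarith [mul_pos_of_neg_of_neg h (show α - β < 0 by linarith)]
  rcases eq_or_lt_of_le hε0 with h0 | h0
  · rw [← h0]
    simp only [Cfun]
    rw [Real.zero_rpow (ne_of_gt ha), Real.zero_rpow (ne_of_gt hb)]
    norm_num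
    right
    exact Real.one_le_rpow one_le_two (by positivity)
  -- main case 0 < ε
  set t : ℝ := α / β with htdef
  have ht0 : 0 < t := by positivity
  have ht1 : t < 1 := (div_lt_one hβ).2 hαβ
  have hE' : ε ^ (γ * α + 1) = ε ^ (1 - t) * (ε ^ (γ * β + 1)) ^ t := by
    rw [← Real.rpow_mul hε0, ← Real.rpow_add h0]
    congr 1
    rw [htdef]
    have hne : β ≠ 0 := ne_of_gt hβ
    field_simp
    ring
  simp only [Cfun]
  rw [hE']
  set x := ε ^ (γ * β + 1) with hxdef
  have hx0 : 0 < x := Real.rpow_pos_of_pos h0 _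
  have hx1 : x ≤ 1 := Real.rpow_le_one hε0 hε1 ha.le
  set c : ℝ := ε ^ (1 - t) with hcdef
  set u : ℝ := x ^ t with hudef
  have hc0 : 0 < c := Real.rpow_pos_of_pos h0 _
  have hc1 : c ≤ 1 := Real.rpow_le_one hε0 hε1 (by linarith)
  have hu0 : 0 < u := Real.rpow_pos_of_pos hx0 _
  have hu1 : u ≤ 1 := Real.rpow_le_one hx0.le hx1 ht0.le
  have h1ε : (0:ℝ) < 1 + ε := by linarith
  set S : ℝ := (x + 1) ^ (1 / β) * (1 + ε) ^ (1 / α) / ((c * u + 1) ^ (1 / α) * (1 + ε) ^ (1 / β))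
    with hSdef
  have hS0 : 0 ≤ S := by positivity
  -- compute S ^ α
  have e1 : ((x + 1) ^ (1 / β)) ^ α = (x + 1) ^ t := by
    rw [← Real.rpow_mul (by positivity)]; congr 1; rw [htdef]; ring
  have e2 : ((1 + ε) ^ (1 / α)) ^ α = 1 + ε := by
    rw [← Real.rpow_mul (by positivity), one_div, inv_mul_cancel₀ (ne_of_gt hα), Real.rpow_one]
  have e3 : ((c * u + 1) ^ (1 / α)) ^ α = c * u + 1 := by
    rw [← Real.rpow_mul (by positivity), one_div, inv_mul_cancel₀ (ne_of_gt hα), Real.rpow_one]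
  have e4 : ((1 + ε) ^ (1 / β)) ^ α = (1 + ε) ^ t := by
    rw [← Real.rpow_mul (by positivity)]; congr 1; rw [htdef]; ring
  have e5 : (1 + ε) = (1 + ε) ^ t * (1 + ε) ^ (1 - t) := by
    rw [← Real.rpow_add h1ε]
    have : t + (1 - t) = 1 := by ring
    rw [this, Real.rpow_one]
  have hSα : S ^ α = (x + 1) ^ t * (1 + ε) ^ (1 - t) / (c * u + 1) := by
    rw [hSdef, Real.div_rpow (by positivity) (by positivity),
      Real.mul_rpow (by positivity) (by positivity),
      Real.mul_rpow (by positivity) (by positivity), e1, e2, e3, e4]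
    have e5' : (1 + ε) ^ (1 - t) = (1 + ε) / (1 + ε) ^ t := by
      rw [Real.rpow_sub h1ε, Real.rpow_one]
    rw [e5']
    have hne1 : ((1 + ε) ^ t : ℝ) ≠ 0 := by positivity
    have hne2 : (c * u + 1 : ℝ) ≠ 0 := by positivity
    field_simp
  -- the key inequality
  set p : ℝ := 2 ^ t with hpdef
  set q : ℝ := 2 ^ (1 - t) with hqdef
  have hp1 : 1 ≤ p := Real.one_le_rpow one_le_two ht0.le
  have hq1 : 1 ≤ q := Real.one_le_rpow one_le_two (by linarith)
  have hp2 : p ≤ 2 := by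
    calc p ≤ 2 ^ (1:ℝ) := Real.rpow_le_rpow_of_exponent_le one_le_two (by linarith)
    _ = 2 := Real.rpow_one 2
  have hq2 : q ≤ 2 := by
    calc q ≤ 2 ^ (1:ℝ) := Real.rpow_le_rpow_of_exponent_le one_le_two (by linarith)
    _ = 2 := Real.rpow_one 2
  have hpq : p * q = 2 := by
    rw [hpdef, hqdef, ← Real.rpow_add two_pos]
    have : t + (1 - t) = 1 := by ring
    rw [this, Real.rpow_one]
  have hb1 : (x + 1) ^ t ≤ 1 + (p - 1) * u := by
    rw [add_comm x 1]; exact lemB ht0 ht1 hx0.le hx1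
  have hb2 : (1 + ε) ^ (1 - t) ≤ 1 + (q - 1) * c := lemB (by linarith) (by linarith) hε0 hε1
  have hprod : (x + 1) ^ t * (1 + ε) ^ (1 - t) ≤ (1 + (p - 1) * u) * (1 + (q - 1) * c) := by
    apply mul_le_mul hb1 hb2 (Real.rpow_nonneg h1ε.le _)
    nlinarith
  set K' : ℝ := max p q with hK'def
  have hkey : (x + 1) ^ t * (1 + ε) ^ (1 - t) ≤ K' * (c * u + 1) := by
    rcases le_total q p with h | h
    · rw [hK'def, max_eq_left h]
      exact le_trans hprod (auxbil hq1 h hp2 hpq hu0.le hu1 hc0.le hc1)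
    · rw [hK'def, max_eq_right h]
      have := auxbil hp1 h hq2 (by rw [mul_comm] at hpq; exact hpq) hc0.le hc1 hu0.le hu1
      calc (x + 1) ^ t * (1 + ε) ^ (1 - t) ≤ (1 + (p - 1) * u) * (1 + (q - 1) * c) := hprod
      _ = (1 + (q - 1) * c) * (1 + (p - 1) * u) := by ring
      _ ≤ q * (u * c + 1) := this
      _ = q * (c * u + 1) := by ring
  have hSαle : S ^ α ≤ K' := by
    rw [hSα, div_le_iff₀ (by positivity)]
    exact hkey
  -- conclude
  have hfin : S ≤ K' ^ (1 / α) := by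
    have h1 : S = (S ^ α) ^ (1 / α) := by
      rw [← Real.rpow_mul hS0, mul_one_div, div_self (ne_of_gt hα), Real.rpow_one]
    rw [h1]
    exact Real.rpow_le_rpow (Real.rpow_nonneg hS0 _) hSαle (by positivity)
  have hKeq : K' ^ (1 / α) = max ((2 : ℝ) ^ (1 / α - 1 / β)) ((2 : ℝ) ^ (1 / β)) := by
    have g1 : (p : ℝ) ^ (1 / α) = (2 : ℝ) ^ (1 / β) := by
      rw [hpdef, ← Real.rpow_mul (by norm_num)]
      congr 1
      rw [htdef]
      have hne : α ≠ 0 := ne_of_gt hα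
      have hne2 : β ≠ 0 := ne_of_gt hβ
      field_simp
    have g2 : (q : ℝ) ^ (1 / α) = (2 : ℝ) ^ (1 / α - 1 / β) := by
      rw [hqdef, ← Real.rpow_mul (by norm_num)]
      congr 1
      rw [htdef]
      have hne : α ≠ 0 := ne_of_gt hα
      have hne2 : β ≠ 0 := ne_of_gt hβ
      field_simp
    rcases le_total q p with h | h
    · rw [hK'def, max_eq_left h, g1, max_eq_right]
      rw [← g1, ← g2]
      exact Real.rpow_le_rpow (by positivity) h (by positivity)
    · rw [hK'def, max_eq_right h, g2, max_eq_left]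
      rw [← g1, ← g2]
      exact Real.rpow_le_rpow (by positivity) h (by positivity)
  rw [← hKeq]
  exact hfin

end AuxLemmas2

open Real Filter Topology in
/-- For `0 < α < β`, the constant `C_{α,β} = sup_{γ ∈ (-1/β,∞)} C_{α,β,γ}` equals
`max{2^{1/α-1/β}, 2^{1/β}}`; explicitly it is `2^{1/α-1/β}` when `0 < α ≤ β/2` and
`2^{1/β}` when `β/2 < α < β`. -/
theorem Cab_case_pos_pos
    (α β : ℝ) (hα : 0 < α) (hαβ : α < β) :
    sSup {c | ∃ γ : ℝ, -(1 / β) < γ ∧ c = Cmax α β γ} =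
        max ((2 : ℝ) ^ (1 / α - 1 / β)) ((2 : ℝ) ^ (1 / β)) ∧
      (α ≤ β / 2 →
        sSup {c | ∃ γ : ℝ, -(1 / β) < γ ∧ c = Cmax α β γ} = (2 : ℝ) ^ (1 / α - 1 / β)) ∧
      (β / 2 < α →
        sSup {c | ∃ γ : ℝ, -(1 / β) < γ ∧ c = Cmax α β γ} = (2 : ℝ) ^ (1 / β)) := by
  have hβ : 0 < β := hα.trans hαβ
  set K : ℝ := max ((2 : ℝ) ^ (1 / α - 1 / β)) ((2 : ℝ) ^ (1 / β)) with hK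
  set S : Set ℝ := {c | ∃ γ : ℝ, -(1 / β) < γ ∧ c = Cmax α β γ} with hSdef
  have himg_bdd : ∀ γ : ℝ, -(1 / β) < γ → ∀ y ∈ Cfun α β γ '' Icc (0:ℝ) 1, y ≤ K := by
    rintro γ hγ y ⟨ε, hε, rfl⟩
    exact cfun_le hα hαβ hγ hε.1 hε.2
  have hcmax_le : ∀ γ : ℝ, -(1 / β) < γ → Cmax α β γ ≤ K := by
    intro γ hγ
    exact csSup_le ((nonempty_Icc.2 zero_le_one).image _) (himg_bdd γ hγ)
  have hSne : S.Nonempty := ⟨Cmax α β 0, 0, neg_lt_zero.2 (by positivity), rfl⟩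
  have hSbdd : BddAbove S := ⟨K, by rintro c ⟨γ, hγ, rfl⟩; exact hcmax_le γ hγ⟩
  have hup : sSup S ≤ K := csSup_le hSne (by rintro c ⟨γ, hγ, rfl⟩; exact hcmax_le γ hγ)
  have hcfun_le_cmax : ∀ γ : ℝ, -(1 / β) < γ → ∀ ε ∈ Icc (0:ℝ) 1,
      Cfun α β γ ε ≤ Cmax α β γ := by
    intro γ hγ ε hε
    exact le_csSup ⟨K, fun y hy => himg_bdd γ hγ y hy⟩ (mem_image_of_mem _ hε)
  -- base tendsto lemma for γ → ∞
  have hbase : ∀ ε₀ : ℝ, 0 < ε₀ → ε₀ < 1 → ∀ s : ℝ, 0 < s →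
      Tendsto (fun γ : ℝ => ε₀ ^ (γ * s + 1)) atTop (𝓝 0) := by
    intro ε₀ h0 h1 s hs
    have hd0 : 0 < ε₀ ^ s := Real.rpow_pos_of_pos h0 s
    have hd1 : ε₀ ^ s < 1 := Real.rpow_lt_one h0.le h1 hs
    have heq : ∀ γ : ℝ, ε₀ ^ (γ * s + 1) = (ε₀ ^ s) ^ γ * ε₀ := by
      intro γ
      rw [Real.rpow_add h0, Real.rpow_one, mul_comm γ s, Real.rpow_mul h0.le]
    simp only [heq]
    have := (tendsto_rpow_atTop_of_base_lt_one (ε₀ ^ s) (by linarith) hd1).mul_const ε₀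
    simpa using this
  -- part A : 2^(1/α-1/β) ≤ sSup S
  have hA : (2 : ℝ) ^ (1 / α - 1 / β) ≤ sSup S := by
    apply le_of_forall_lt
    intro w hw
    have hnb : (𝓝[Ioo (0:ℝ) 1] 1).NeBot := by
      refine mem_closure_iff_nhdsWithin_neBot.1 ?_
      rw [closure_Ioo (by norm_num : (0:ℝ) ≠ 1)]
      exact ⟨zero_le_one, le_refl 1⟩
    obtain ⟨ε₀, hwe, hε₀⟩ : ∃ e : ℝ, w < (1+e)^(1/α)/(1+e)^(1/β) ∧ e ∈ Ioo (0:ℝ) 1 := by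
      have hcont : ContinuousAt (fun e : ℝ => (1+e)^(1/α)/(1+e)^(1/β)) 1 := by
        have hc1 : ContinuousAt (fun e : ℝ => (1+e)^(1/α)) 1 :=
          (Real.continuousAt_rpow_const ((1:ℝ)+1) (1/α) (Or.inl (by norm_num))).comp
            (by fun_prop : ContinuousAt (fun e : ℝ => 1+e) 1)
        have hc2 : ContinuousAt (fun e : ℝ => (1+e)^(1/β)) 1 :=
          (Real.continuousAt_rpow_const ((1:ℝ)+1) (1/β) (Or.inl (by norm_num))).comp
            (by fun_prop : ContinuousAt (fun e : ℝ => 1+e) 1)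
        exact hc1.div hc2 (by norm_num; positivity)
      have hw' : w < (fun e : ℝ => (1+e)^(1/α)/(1+e)^(1/β)) 1 := by
        show w < ((1:ℝ)+1)^(1/α)/((1:ℝ)+1)^(1/β)
        rw [show ((1:ℝ)+1) = 2 from by norm_num, ← Real.rpow_sub two_pos]
        exact hw
      have hev : ∀ᶠ e in 𝓝[Ioo (0:ℝ) 1] 1, w < (1+e)^(1/α)/(1+e)^(1/β) :=
        ((hcont.eventually (eventually_gt_nhds hw')).filter_mono nhdsWithin_le_nhds)
      exact (hev.and eventually_mem_nhdsWithin).exists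
    obtain ⟨h0, h1⟩ := hε₀
    have h1ε : (0:ℝ) < 1 + ε₀ := by linarith
    have hlim : Tendsto (fun γ : ℝ => Cfun α β γ ε₀) atTop
        (𝓝 ((1+ε₀)^(1/α)/(1+ε₀)^(1/β))) := by
      have hT1 : Tendsto (fun γ : ℝ => (ε₀ ^ (γ * β + 1) + 1) ^ (1/β)) atTop (𝓝 1) := by
        have h := (hbase ε₀ h0 h1 β hβ).add_const 1
        have hc : ContinuousAt (fun z : ℝ => z ^ (1/β)) 1 :=
          Real.continuousAt_rpow_const 1 (1/β) (Or.inl one_ne_zero)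
        have := hc.tendsto.comp (by simpa using h)
        simpa [Function.comp_def] using this
      have hT2 : Tendsto (fun γ : ℝ => (ε₀ ^ (γ * α + 1) + 1) ^ (1/α)) atTop (𝓝 1) := by
        have h := (hbase ε₀ h0 h1 α hα).add_const 1
        have hc : ContinuousAt (fun z : ℝ => z ^ (1/α)) 1 :=
          Real.continuousAt_rpow_const 1 (1/α) (Or.inl one_ne_zero)
        have := hc.tendsto.comp (by simpa using h)
        simpa [Function.comp_def] using this
      have hne : (1 : ℝ) * (1+ε₀)^(1/β) ≠ 0 := by positivity
      have := (hT1.mul_const ((1+ε₀)^(1/α))).div (hT2.mul_const ((1+ε₀)^(1/β)))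
        (by simpa using hne)
      simp only [Cfun]
      simpa [Pi.div_def] using this
    have hev2 : ∀ᶠ γ in atTop, w < Cfun α β γ ε₀ := hlim.eventually (eventually_gt_nhds hwe)
    have hev3 : ∀ᶠ γ : ℝ in atTop, -(1/β) < γ := eventually_gt_atTop _
    obtain ⟨γ, hγ1, hγ2⟩ := (hev2.and hev3).exists
    have : w < Cmax α β γ :=
      lt_of_lt_of_le hγ1 (hcfun_le_cmax γ hγ2 ε₀ ⟨h0.le, h1.le⟩)
    exact lt_of_lt_of_le this (le_csSup hSbdd ⟨γ, hγ2, rfl⟩)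
  -- part B : 2^(1/β) ≤ sSup S
  have hB : (2 : ℝ) ^ (1 / β) ≤ sSup S := by
    apply le_of_forall_lt
    intro w hw
    set t : ℝ := α / β with htdef
    have ht0 : 0 < t := by positivity
    have ht1 : t < 1 := (div_lt_one hβ).2 hαβ
    set g0 : ℝ → ℝ := fun e =>
      (((1:ℝ)+1) ^ (1/β) * (1+e)^(1/α)) / ((e ^ (1-t) + 1) ^ (1/α) * (1+e)^(1/β)) with hg0
    have hnb : (𝓝[Ioo (0:ℝ) 1] 0).NeBot := by
      refine mem_closure_iff_nhdsWithin_neBot.1 ?_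
      rw [closure_Ioo (by norm_num : (0:ℝ) ≠ 1)]
      exact ⟨le_refl 0, zero_le_one⟩
    obtain ⟨ε₀, hwe, hε₀⟩ : ∃ e : ℝ, w < g0 e ∧ e ∈ Ioo (0:ℝ) 1 := by
      have hcont : ContinuousAt g0 0 := by
        have hc0 : ContinuousAt (fun e : ℝ => (e ^ (1-t) + 1) ^ (1/α)) 0 := by
          have hca : ContinuousAt (fun e : ℝ => e ^ (1-t)) 0 :=
            Real.continuousAt_rpow_const 0 (1-t) (Or.inr (by linarith))
          have : ContinuousAt (fun e : ℝ => e ^ (1-t) + 1) 0 := hca.add continuousAt_const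
          refine (Real.continuousAt_rpow_const _ (1/α) (Or.inl ?_)).comp this
          simp [Real.zero_rpow (by linarith : (1:ℝ)-t ≠ 0)]
        have hc1 : ContinuousAt (fun e : ℝ => (1+e)^(1/α)) 0 :=
          (Real.continuousAt_rpow_const ((1:ℝ)+0) (1/α) (Or.inl (by norm_num))).comp
            (by fun_prop : ContinuousAt (fun e : ℝ => 1+e) 0)
        have hc2 : ContinuousAt (fun e : ℝ => (1+e)^(1/β)) 0 :=
          (Real.continuousAt_rpow_const ((1:ℝ)+0) (1/β) (Or.inl (by norm_num))).comp
            (by fun_prop : ContinuousAt (fun e : ℝ => 1+e) 0)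
        refine (continuousAt_const.mul hc1).div (hc0.mul hc2) ?_
        simp [Real.zero_rpow (by linarith : (1:ℝ)-t ≠ 0), Real.one_rpow]
      have hval : g0 0 = (2:ℝ) ^ (1/β) := by
        simp [hg0, Real.zero_rpow (by linarith : (1:ℝ)-t ≠ 0), Real.one_rpow]
        norm_num
      have hw' : w < g0 0 := by rw [hval]; exact hw
      have hev : ∀ᶠ e in 𝓝[Ioo (0:ℝ) 1] 0, w < g0 e :=
        ((hcont.eventually (eventually_gt_nhds hw')).filter_mono nhdsWithin_le_nhds)
      exact (hev.and eventually_mem_nhdsWithin).exists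
    obtain ⟨h0, h1⟩ := hε₀
    have h1ε : (0:ℝ) < 1 + ε₀ := by linarith
    set L : ℝ := -(1/β) with hLdef
    have hlim : Tendsto (fun γ : ℝ => Cfun α β γ ε₀) (𝓝[>] L) (𝓝 (g0 ε₀)) := by
      have hb1 : Tendsto (fun γ : ℝ => ε₀ ^ (γ * β + 1)) (𝓝[>] L) (𝓝 1) := by
        have hc : ContinuousAt (fun γ : ℝ => ε₀ ^ (γ * β + 1)) L :=
          (Real.continuousAt_const_rpow (ne_of_gt h0)).comp (by fun_prop)
        have hv : ε₀ ^ (L * β + 1) = 1 := by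
          have : L * β + 1 = 0 := by rw [hLdef]; field_simp; norm_num
          rw [this, Real.rpow_zero]
        have := hc.tendsto.mono_left (nhdsWithin_le_nhds : 𝓝[>] L ≤ 𝓝 L)
        rwa [hv] at this
      have hb2 : Tendsto (fun γ : ℝ => ε₀ ^ (γ * α + 1)) (𝓝[>] L) (𝓝 (ε₀ ^ (1-t))) := by
        have hc : ContinuousAt (fun γ : ℝ => ε₀ ^ (γ * α + 1)) L :=
          (Real.continuousAt_const_rpow (ne_of_gt h0)).comp (by fun_prop)
        have hv : L * α + 1 = 1 - t := by rw [hLdef, htdef]; field_simp; ring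
        have := hc.tendsto.mono_left (nhdsWithin_le_nhds : 𝓝[>] L ≤ 𝓝 L)
        rwa [hv] at this
      have hT1 : Tendsto (fun γ : ℝ => (ε₀ ^ (γ * β + 1) + 1) ^ (1/β)) (𝓝[>] L)
          (𝓝 (((1:ℝ)+1) ^ (1/β))) := by
        have hc : ContinuousAt (fun z : ℝ => z ^ (1/β)) ((1:ℝ)+1) :=
          Real.continuousAt_rpow_const _ (1/β) (Or.inl (by norm_num))
        exact hc.tendsto.comp (hb1.add_const 1)
      have hT2 : Tendsto (fun γ : ℝ => (ε₀ ^ (γ * α + 1) + 1) ^ (1/α)) (𝓝[>] L)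
          (𝓝 ((ε₀ ^ (1-t) + 1) ^ (1/α))) := by
        have hc : ContinuousAt (fun z : ℝ => z ^ (1/α)) (ε₀ ^ (1-t) + 1) := by
          refine Real.continuousAt_rpow_const _ (1/α) (Or.inl ?_)
          positivity
        exact hc.tendsto.comp (hb2.add_const 1)
      have hne : ((ε₀ ^ (1-t) + 1) ^ (1/α)) * (1+ε₀)^(1/β) ≠ 0 := by positivity
      have := (hT1.mul_const ((1+ε₀)^(1/α))).div (hT2.mul_const ((1+ε₀)^(1/β))) hne
      simp only [Cfun, hg0]
      exact this
    have hev2 : ∀ᶠ γ in 𝓝[>] L, w < Cfun α β γ ε₀ := hlim.eventually (eventually_gt_nhds hwe)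
    have hev3 : ∀ᶠ γ in 𝓝[>] L, L < γ := eventually_mem_nhdsWithin
    obtain ⟨γ, hγ1, hγ2⟩ := (hev2.and hev3).exists
    have : w < Cmax α β γ :=
      lt_of_lt_of_le hγ1 (hcfun_le_cmax γ hγ2 ε₀ ⟨h0.le, h1.le⟩)
    exact lt_of_lt_of_le this (le_csSup hSbdd ⟨γ, hγ2, rfl⟩)
  have hmain : sSup S = K := le_antisymm hup (by rw [hK]; exact max_le hA hB)
  refine ⟨hmain, ?_, ?_⟩
  · intro hhalf
    rw [hmain, hK]
    apply max_eq_left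
    rw [Real.rpow_le_rpow_left_iff one_lt_two]
    have h2 : 2/β ≤ 1/α := (div_le_div_iff₀ hβ hα).2 (by linarith)
    have h3 : (2:ℝ)/β = 1/β + 1/β := by ring
    linarith
  · intro hhalf
    rw [hmain, hK]
    apply max_eq_right
    rw [Real.rpow_le_rpow_left_iff one_lt_two]
    have h2 : 1/α ≤ 2/β := (div_le_div_iff₀ hα hβ).2 (by linarith)
    have h3 : (2:ℝ)/β = 1/β + 1/β := by ring
    linarith
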